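/- For every vector ψ ∈ ℂ³ with ‖ψ‖ = 1, there exist a real orthogonal 3×3 matrix O with det O = 1, real numbers θ and φ, and a complex number c with |c| = 1, such that O·ψ = c · (e^{iφ}·cos θ, sin θ, 0); i.e., every unit vector in ℂ³ can be brought to this normal form by an SO(3) rotation and a global phase. -/

import Mathlib

open Matrix


lemma rot_exists (u v : Fin 3 → ℝ) (hu : u ⬝ᵥ u = 1) (hv : v ⬝ᵥ v = 1)
    (huv : u ⬝ᵥ v = 0) :
    ∃ O : Matrix (Fin 3) (Fin 3) ℝ, Oᵀ * O = 1 ∧ O.det = 1 ∧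
      O.mulVec u = ![1, 0, 0] ∧ O.mulVec v = ![0, 1, 0] := by
  have hw : (u ⨯₃ v) ⬝ᵥ (u ⨯₃ v) = 1 := by
    rw [cross_dot_cross, hu, hv, huv]; ring
  have hvu : v ⬝ᵥ u = 0 := by rw [dotProduct_comm]; exact huv
  have huw : u ⬝ᵥ (u ⨯₃ v) = 0 := dot_self_cross u v
  have hvw : v ⬝ᵥ (u ⨯₃ v) = 0 := dot_cross_self u v
  have hwu : (u ⨯₃ v) ⬝ᵥ u = 0 := by rw [dotProduct_comm]; exact huw
  have hwv : (u ⨯₃ v) ⬝ᵥ v = 0 := by rw [dotProduct_comm]; exact hvw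
  have hdet : Matrix.det (Matrix.of ![u, v, u ⨯₃ v]) = 1 := by
    have h1 : Matrix.det (Matrix.of ![u, v, u ⨯₃ v]) = Matrix.det ![u, v, u ⨯₃ v] := rfl
    rw [h1, ← triple_product_eq_det, triple_product_permutation,
      triple_product_permutation, hw]
  simp only [dotProduct, Fin.sum_univ_three] at hu hv huv hvu huw hvw hwu hwv hw
  refine ⟨Matrix.of ![u, v, u ⨯₃ v], ?_, hdet, ?_, ?_⟩
  · rw [mul_eq_one_comm]
    ext i j
    rw [Matrix.mul_apply']
    have : (fun k => (Matrix.of ![u, v, u ⨯₃ v])ᵀ k j) = ![u, v, u ⨯₃ v] j := rfl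
    rw [this]
    fin_cases i <;> fin_cases j <;> simp [dotProduct, Fin.sum_univ_three] <;> linarith
  · funext i
    have : (Matrix.of ![u, v, u ⨯₃ v]).mulVec u i = ![u, v, u ⨯₃ v] i ⬝ᵥ u := rfl
    rw [this]
    fin_cases i <;> simp [dotProduct, Fin.sum_univ_three] <;> linarith
  · funext i
    have : (Matrix.of ![u, v, u ⨯₃ v]).mulVec v i = ![u, v, u ⨯₃ v] i ⬝ᵥ v := rfl
    rw [this]
    fin_cases i <;> simp [dotProduct, Fin.sum_univ_three] <;> linarith

lemma perp_exists (u : Fin 3 → ℝ) (hu : u ⬝ᵥ u = 1) :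
    ∃ v : Fin 3 → ℝ, v ⬝ᵥ v = 1 ∧ u ⬝ᵥ v = 0 := by
  by_cases h : u 0 = 0 ∧ u 1 = 0
  · exact ⟨![1, 0, 0], by simp [dotProduct, Fin.sum_univ_three],
      by simp [dotProduct, Fin.sum_univ_three, h.1]⟩
  · have hpos : 0 < u 0 ^ 2 + u 1 ^ 2 := by
      rcases not_and_or.1 h with h0 | h0 <;> positivity
    set r := Real.sqrt (u 0 ^ 2 + u 1 ^ 2) with hr
    have hrpos : 0 < r := Real.sqrt_pos.2 hpos
    have hr2 : r ^ 2 = u 0 ^ 2 + u 1 ^ 2 := Real.sq_sqrt hpos.le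
    refine ⟨![u 1 / r, -u 0 / r, 0], ?_, ?_⟩
    · simp only [dotProduct, Fin.sum_univ_three, Matrix.cons_val_zero, Matrix.cons_val_one, Matrix.cons_val_two, Matrix.head_cons, Matrix.tail_cons]
      field_simp [dotProduct, Fin.sum_univ_three]
      linarith [hr2]
    · simp only [dotProduct, Fin.sum_univ_three, Matrix.cons_val_zero, Matrix.cons_val_one, Matrix.cons_val_two, Matrix.head_cons, Matrix.tail_cons]
      field_simp [dotProduct, Fin.sum_univ_three]
      ring

lemma dot_self_nonneg (a : Fin 3 → ℝ) : 0 ≤ a ⬝ᵥ a :=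
  Finset.sum_nonneg fun i _ => mul_self_nonneg _

lemma decomp (a b : Fin 3 → ℝ) (hab : a ⬝ᵥ b = 0) :
    ∃ u v : Fin 3 → ℝ, u ⬝ᵥ u = 1 ∧ v ⬝ᵥ v = 1 ∧ u ⬝ᵥ v = 0 ∧
      b = Real.sqrt (b ⬝ᵥ b) • u ∧ a = Real.sqrt (a ⬝ᵥ a) • v := by
  have unit_smul : ∀ x : Fin 3 → ℝ, x ≠ 0 →
      ((Real.sqrt (x ⬝ᵥ x))⁻¹ • x) ⬝ᵥ ((Real.sqrt (x ⬝ᵥ x))⁻¹ • x) = 1 ∧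
      x = Real.sqrt (x ⬝ᵥ x) • ((Real.sqrt (x ⬝ᵥ x))⁻¹ • x) := by
    intro x hx
    have hpos : 0 < x ⬝ᵥ x :=
      lt_of_le_of_ne (dot_self_nonneg x)
        (fun h => hx (dotProduct_self_eq_zero.mp h.symm))
    have hs : 0 < Real.sqrt (x ⬝ᵥ x) := Real.sqrt_pos.2 hpos
    have hss : Real.sqrt (x ⬝ᵥ x) * Real.sqrt (x ⬝ᵥ x) = x ⬝ᵥ x :=
      Real.mul_self_sqrt (dot_self_nonneg x)
    constructor
    · rw [smul_dotProduct, dotProduct_smul, smul_smul, smul_eq_mul]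
      generalize hD : x ⬝ᵥ x = D at hpos hss ⊢
      field_simp
      rw [Real.sq_sqrt hpos.le]
    · rw [smul_smul, mul_inv_cancel₀ hs.ne', one_smul]
  by_cases hb : b = 0
  · by_cases ha : a = 0
    · refine ⟨![1,0,0], ![0,1,0], ?_, ?_, ?_, ?_, ?_⟩ <;>
        simp [dotProduct, Fin.sum_univ_three, ha, hb]
    · obtain ⟨hv1, hv2⟩ := unit_smul a ha
      obtain ⟨u, hu1, hu2⟩ := perp_exists _ hv1
      exact ⟨u, _, hu1, hv1, by rwa [dotProduct_comm], by simp [hb], hv2⟩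
  · obtain ⟨hu1, hu2⟩ := unit_smul b hb
    by_cases ha : a = 0
    · obtain ⟨v, hv1, hv2⟩ := perp_exists _ hu1
      exact ⟨_, v, hu1, hv1, hv2, hu2, by simp [ha]⟩
    · obtain ⟨hv1, hv2⟩ := unit_smul a ha
      refine ⟨_, _, hu1, hv1, ?_, hu2, hv2⟩
      rw [smul_dotProduct, dotProduct_smul, dotProduct_comm b a, hab]
      simp

theorem unit_vector_normal_form (ψ : EuclideanSpace ℂ (Fin 3)) (hψ : ‖ψ‖ = 1) :
    ∃ (O : Matrix (Fin 3) (Fin 3) ℝ) (θ φ : ℝ) (c : ℂ),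
      Oᵀ * O = 1 ∧ O.det = 1 ∧ ‖c‖ = 1 ∧
      (O.map Complex.ofReal).mulVec (ψ : Fin 3 → ℂ) =
        c • ![Complex.exp (Complex.I * φ) * (Real.cos θ : ℂ), (Real.sin θ : ℂ), 0] := by
  set S : ℂ := ∑ i, (ψ : Fin 3 → ℂ) i ^ 2 with hS
  set c : ℂ := if S = 0 then 1 else Complex.exp ((S.arg / 2 : ℝ) * Complex.I) with hcdef
  have hc : ‖c‖ = 1 := by
    rw [hcdef]; split
    · simp
    · exact Complex.norm_exp_ofReal_mul_I _
  have hcc : (starRingEnd ℂ) c * c = 1 := by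
    rw [mul_comm, Complex.mul_conj, Complex.normSq_eq_norm_sq, hc]
    norm_num
  have hd : ((starRingEnd ℂ) c) ^ 2 * S = ((‖S‖ : ℝ) : ℂ) := by
    by_cases h0 : S = 0
    · simp [h0]
    · have hc2 : c ^ 2 = Complex.exp (↑S.arg * Complex.I) := by
        rw [hcdef, if_neg h0, sq, ← Complex.exp_add]
        congr 1
        push_cast
        ring
      calc ((starRingEnd ℂ) c) ^ 2 * S
          = ((starRingEnd ℂ) c) ^ 2 * ((‖S‖ : ℝ) * Complex.exp (↑S.arg * Complex.I)) := by
            rw [Complex.norm_mul_exp_arg_mul_I]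
        _ = ((‖S‖ : ℝ) : ℂ) * ((starRingEnd ℂ) c * c) ^ 2 := by rw [← hc2]; ring
        _ = ((‖S‖ : ℝ) : ℂ) := by rw [hcc]; ring
  set a : Fin 3 → ℝ := fun i => ((starRingEnd ℂ) c * (ψ : Fin 3 → ℂ) i).re with hadef
  set b : Fin 3 → ℝ := fun i => ((starRingEnd ℂ) c * (ψ : Fin 3 → ℂ) i).im with hbdef
  have hpsi : ∀ i, (ψ : Fin 3 → ℂ) i = c * ((a i : ℝ) + (b i : ℝ) * Complex.I) := by
    intro i
    rw [hadef, hbdef]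
    simp only [Complex.re_add_im]
    rw [← mul_assoc, mul_comm c, hcc, one_mul]
  have hab : a ⬝ᵥ b = 0 := by
    have him : (((starRingEnd ℂ) c) ^ 2 * S).im = 0 := by rw [hd]; exact Complex.ofReal_im _
    rw [hS, Finset.mul_sum] at him
    simp only [Complex.im_sum] at him
    have heq : ∀ i, (((starRingEnd ℂ) c) ^ 2 * (ψ : Fin 3 → ℂ) i ^ 2).im = 2 * a i * b i := by
      intro i
      have : ((starRingEnd ℂ) c) ^ 2 * (ψ : Fin 3 → ℂ) i ^ 2
          = ((starRingEnd ℂ) c * (ψ : Fin 3 → ℂ) i) * ((starRingEnd ℂ) c * (ψ : Fin 3 → ℂ) i) := by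
        ring
      rw [this, Complex.mul_im, hadef, hbdef]
      ring
    simp only [heq, Fin.sum_univ_three] at him
    simp only [dotProduct, Fin.sum_univ_three]
    linarith
  have habs : a ⬝ᵥ a + b ⬝ᵥ b = 1 := by
    have hnorm : ∑ i, ‖(ψ : Fin 3 → ℂ) i‖ ^ 2 = 1 := by
      rw [EuclideanSpace.norm_eq] at hψ
      have := Real.sqrt_eq_one.mp hψ
      simpa using this
    have h1 : ∀ i, a i * a i + b i * b i = ‖(ψ : Fin 3 → ℂ) i‖ ^ 2 := by
      intro i
      have : a i * a i + b i * b i = Complex.normSq ((starRingEnd ℂ) c * (ψ : Fin 3 → ℂ) i) := by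
        rw [Complex.normSq_apply, hadef, hbdef]
      rw [this, _root_.map_mul, Complex.normSq_conj, Complex.normSq_eq_norm_sq, hc, Complex.normSq_eq_norm_sq]
      norm_num
    have e := hnorm
    simp only [Fin.sum_univ_three] at e
    simp only [dotProduct, Fin.sum_univ_three]
    linarith [h1 0, h1 1, h1 2, e]
  obtain ⟨u, v, hu, hv, huv, hbu, hav⟩ := decomp a b hab
  obtain ⟨O, hOrth, hdet, hOu, hOv⟩ := rot_exists u v hu hv huv
  have hOa : O.mulVec a = ![0, Real.sqrt (a ⬝ᵥ a), 0] := by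
    conv_lhs => rw [hav]
    rw [Matrix.mulVec_smul, hOv]
    funext i; fin_cases i <;> simp
  have hOb : O.mulVec b = ![Real.sqrt (b ⬝ᵥ b), 0, 0] := by
    conv_lhs => rw [hbu]
    rw [Matrix.mulVec_smul, hOu]
    funext i; fin_cases i <;> simp
  have ha1 : a ⬝ᵥ a ≤ 1 := by linarith [dot_self_nonneg b]
  have hsin : Real.sin (Real.arcsin (Real.sqrt (a ⬝ᵥ a))) = Real.sqrt (a ⬝ᵥ a) :=
    Real.sin_arcsin (le_trans (by norm_num) (Real.sqrt_nonneg _)) (Real.sqrt_le_one.mpr ha1)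
  have hcos : Real.cos (Real.arcsin (Real.sqrt (a ⬝ᵥ a))) = Real.sqrt (b ⬝ᵥ b) := by
    rw [Real.cos_arcsin, Real.sq_sqrt (dot_self_nonneg a)]
    congr 1
    linarith
  have hexp : Complex.exp (Complex.I * ((Real.pi / 2 : ℝ) : ℂ)) = Complex.I := by
    rw [mul_comm, Complex.exp_mul_I, ← Complex.ofReal_cos, ← Complex.ofReal_sin,
      Real.cos_pi_div_two, Real.sin_pi_div_two]
    simp
  refine ⟨O, Real.arcsin (Real.sqrt (a ⬝ᵥ a)), Real.pi / 2, c, hOrth, hdet, hc, ?_⟩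
  have key : ∀ i, ((O.map Complex.ofReal).mulVec (ψ : Fin 3 → ℂ)) i =
      c * (((O.mulVec a) i : ℝ) + ((O.mulVec b) i : ℝ) * Complex.I) := by
    intro i
    simp only [Matrix.mulVec, dotProduct, Fin.sum_univ_three, Matrix.map_apply, hpsi]
    push_cast
    ring
  funext i
  rw [key i, hOa, hOb]
  fin_cases i <;>
    · simp only [Pi.smul_apply, smul_eq_mul, Matrix.cons_val_zero, Matrix.cons_val_one,
        Matrix.head_cons]
      rw [hsin, hcos, hexp]
      push_cast
      push_cast
      ring
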